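/- Let t be a sectorial sesquilinear form on a dense domain D in a complex Hilbert space, with symmetric part h[x,y] = (1/2)(t[x,y] + conj(t[y,x])) and imaginary part k[x,y] = (1/(2i))(t[x,y] − conj(t[y,x])), and suppose |k[x]| ≤ (tan θ)·h[x] for all x ∈ D (sector angle θ ∈ (0, π/2)). If t is closable, then its symmetric part h is closable. -/

import Mathlib

open Filter
open scoped ComplexConjugate

/-- Let `t` be a sectorial sesquilinear form on a dense domain `D`
(`0 ≤ Re t[x]` and `|Im t[x]| ≤ tan θ · Re t[x]` for a sector angle `θ ∈ (0, π/2)`,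
noting `h[x] = Re t[x]` and `k[x] = Im t[x]`). If `t` is closable, then its symmetric
part `h` is closable. -/
theorem stmt9 {H : Type*} [NormedAddCommGroup H] [InnerProductSpace ℂ H] [CompleteSpace H]
    (D : Submodule ℂ H) (hD : Dense (D : Set H))
    (t : D →ₗ⋆[ℂ] D →ₗ[ℂ] ℂ)
    (θ : ℝ) (hθ : θ ∈ Set.Ioo 0 (Real.pi / 2))
    (hRe : ∀ x : D, 0 ≤ (t x x).re)
    (hsector : ∀ x : D, |(t x x).im| ≤ Real.tan θ * (t x x).re)
    (hclosable : ∀ xs : ℕ → D,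
      Tendsto (fun n => ((xs n : H))) atTop (nhds 0) →
      (∀ ε > 0, ∃ N, ∀ n ≥ N, ∀ m ≥ N, ‖t (xs n - xs m) (xs n - xs m)‖ < ε) →
      Tendsto (fun n => t (xs n) (xs n)) atTop (nhds 0)) :
    ∀ xs : ℕ → D,
      Tendsto (fun n => ((xs n : H))) atTop (nhds 0) →
      (∀ ε > 0, ∃ N, ∀ n ≥ N, ∀ m ≥ N, (t (xs n - xs m) (xs n - xs m)).re < ε) →
      Tendsto (fun n => (t (xs n) (xs n)).re) atTop (nhds 0) := by
  intro xs hx hcauchy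
  have htan : 0 < Real.tan θ := Real.tan_pos_of_pos_of_lt_pi_div_two hθ.1 hθ.2
  have hC : (0:ℝ) < 1 + Real.tan θ := by linarith
  have key : ∀ x : D, ‖t x x‖ ≤ (1 + Real.tan θ) * (t x x).re := by
    intro x
    calc ‖t x x‖ ≤ |(t x x).re| + |(t x x).im| := Complex.norm_le_abs_re_add_abs_im _
    _ ≤ (t x x).re + Real.tan θ * (t x x).re := by
        have := hRe x; have := hsector x
        rw [abs_of_nonneg ‹0 ≤ (t x x).re›]; linarith
    _ = (1 + Real.tan θ) * (t x x).re := by ring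
  have ht : Tendsto (fun n => t (xs n) (xs n)) atTop (nhds 0) := by
    apply hclosable xs hx
    intro ε hε
    obtain ⟨N, hN⟩ := hcauchy (ε / (1 + Real.tan θ)) (by positivity)
    refine ⟨N, fun n hn m hm => ?_⟩
    calc ‖t (xs n - xs m) (xs n - xs m)‖
        ≤ (1 + Real.tan θ) * (t (xs n - xs m) (xs n - xs m)).re := key _
    _ < (1 + Real.tan θ) * (ε / (1 + Real.tan θ)) := by
        exact mul_lt_mul_of_pos_left (hN n hn m hm) hC
    _ = ε := by field_simp
  have := (Complex.continuous_re.tendsto 0).comp ht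
  simpa [Function.comp_def] using this
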